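/- Let (X,Z) have survival copula Ĉ with marginals F̄(x) = P(X > x), Ḡ(z) = P(Z > z), so that P(X > x, Z > z) = Ĉ(F̄(x), Ḡ(z)). If Z is integrable, symmetric around zero, and Ĉ(u,v) + Ĉ(u,1-v) ≥ u for all u,v ∈ [0,1], then for every x with F̄(x) > 0, E(Z | X > x) ≥ 0; consequently X ≤_CX X+Z. -/

import Mathlib

open MeasureTheory Set

/-- A (bivariate) copula: grounded, with uniform marginals, and 2-increasing. -/
structure IsCopula (C : ℝ → ℝ → ℝ) : Prop where
  grounded_fst : ∀ v ∈ Icc (0:ℝ) 1, C 0 v = 0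
  grounded_snd : ∀ u ∈ Icc (0:ℝ) 1, C u 0 = 0
  margin_fst : ∀ u ∈ Icc (0:ℝ) 1, C u 1 = u
  margin_snd : ∀ v ∈ Icc (0:ℝ) 1, C 1 v = v
  twoIncreasing : ∀ u₁ u₂ v₁ v₂ : ℝ, u₁ ∈ Icc (0:ℝ) 1 → u₂ ∈ Icc (0:ℝ) 1 →
    v₁ ∈ Icc (0:ℝ) 1 → v₂ ∈ Icc (0:ℝ) 1 → u₁ ≤ u₂ → v₁ ≤ v₂ →
    C u₁ v₂ + C u₂ v₁ ≤ C u₁ v₁ + C u₂ v₂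

/-- Conditional expectation of `Z` given an event `A`: `E(Z·1_A)/P(A)`. -/
noncomputable def condExpEvent {Ω : Type*} [MeasurableSpace Ω] (μ : Measure Ω)
    (Z : Ω → ℝ) (A : Set Ω) : ℝ := (∫ ω in A, Z ω ∂μ) / (μ A).toReal

section Aux


variable {Ω : Type*} [MeasurableSpace Ω]

lemma posPart_lintegral_ne_top (μ : Measure Ω) {W : Ω → ℝ} (hW : Integrable W μ) :
    ∫⁻ a, ENNReal.ofReal (W a) ∂μ ≠ ⊤ := by
  have h := hW.2
  rw [hasFiniteIntegral_def] at h
  refine ne_of_lt (lt_of_le_of_lt (lintegral_mono fun a => ?_) h)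
  rw [← ofReal_norm]
  exact ENNReal.ofReal_le_ofReal (le_abs_self _)

lemma tailpos_repr (μ : Measure Ω) {W : Ω → ℝ} (hWm : Measurable W) :
    ∫⁻ a, ENNReal.ofReal (W a) ∂μ = ∫⁻ t in Ioi (0:ℝ), μ {a | t < W a} := by
  have h1 : ∀ a, ENNReal.ofReal (W a) = ENNReal.ofReal (max (W a) 0) := by
    intro a
    rcases le_total (W a) 0 with h | h
    · rw [ENNReal.ofReal_of_nonpos h, max_eq_right h, ENNReal.ofReal_zero]
    · rw [max_eq_left h]
  have key := lintegral_eq_lintegral_meas_lt (f := fun a => max (W a) 0) μ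
    (Filter.Eventually.of_forall fun a => le_max_right _ _)
    (hWm.max measurable_const).aemeasurable
  simp_rw [h1]
  rw [key]
  refine setLIntegral_congr_fun measurableSet_Ioi (fun t ht => ?_)
  congr 1
  ext a
  simp only [mem_Ioi] at ht
  simp only [mem_setOf_eq, lt_max_iff]
  exact ⟨fun h => h.elim id (fun h0 => absurd (ht.trans h0) (lt_irrefl 0)), fun h => Or.inl h⟩

lemma tailneg_repr (μ : Measure Ω) {W : Ω → ℝ} (hWm : Measurable W) :
    ∫⁻ a, ENNReal.ofReal (-W a) ∂μ = ∫⁻ t in Ioi (0:ℝ), μ {a | W a < -t} := by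
  have := tailpos_repr μ (W := fun a => -W a) hWm.neg
  rw [this]
  refine setLIntegral_congr_fun measurableSet_Ioi (fun t _ => ?_)
  congr 1
  ext a
  simp only [mem_setOf_eq]
  constructor <;> intro h <;> linarith

lemma tail_repr (μ : Measure Ω) {W : Ω → ℝ} (hW : Integrable W μ) (hWm : Measurable W) :
    ∫ a, W a ∂μ = (∫⁻ t in Ioi (0:ℝ), μ {a | t < W a}).toReal
      - (∫⁻ t in Ioi (0:ℝ), μ {a | W a < -t}).toReal := by
  rw [integral_eq_lintegral_pos_part_sub_lintegral_neg_part hW, tailpos_repr μ hWm,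
    tailneg_repr μ hWm]

lemma int_nonneg_of_tail (μ : Measure Ω) {W : Ω → ℝ} (hW : Integrable W μ) (hWm : Measurable W)
    (h : ∀ t : ℝ, 0 < t → μ {a | W a < -t} ≤ μ {a | t < W a}) :
    0 ≤ ∫ a, W a ∂μ := by
  rw [tail_repr μ hW hWm, sub_nonneg]
  have hfin : ∫⁻ t in Ioi (0:ℝ), μ {a | t < W a} ≠ ⊤ := by
    rw [← tailpos_repr μ hWm]; exact posPart_lintegral_ne_top μ hW
  have hle : ∫⁻ t in Ioi (0:ℝ), μ {a | W a < -t} ≤ ∫⁻ t in Ioi (0:ℝ), μ {a | t < W a} :=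
    setLIntegral_mono' measurableSet_Ioi fun t ht => h t ht
  exact ENNReal.toReal_mono hfin hle


section Main
variable (μ : Measure Ω) [IsProbabilityMeasure μ] (X Z : Ω → ℝ)
  (hX : Measurable X) (hZmeas : Measurable Z) (hZint : Integrable Z μ)
  (Chat : ℝ → ℝ → ℝ)
  (hjoint : ∀ x z : ℝ, (μ {ω | x < X ω ∧ z < Z ω}).toReal =
    Chat (μ {ω | x < X ω}).toReal (μ {ω | z < Z ω}).toReal)
  (hsymm : ∀ z : ℝ, (μ {ω | -z < Z ω}).toReal = 1 - (μ {ω | z < Z ω}).toReal)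
  (hwPQD : ∀ u ∈ Icc (0:ℝ) 1, ∀ v ∈ Icc (0:ℝ) 1, u ≤ Chat u v + Chat u (1 - v))

include hX hZmeas hZint hjoint hsymm hwPQD

lemma lemA (x : ℝ) : 0 ≤ ∫ ω in {ω | x < X ω}, Z ω ∂μ := by
  set A := {ω | x < X ω} with hA
  have hAm : MeasurableSet A := measurableSet_lt measurable_const hX
  have hle1 : ∀ s : Set Ω, (μ s).toReal ≤ 1 := fun s => by
    simpa using ENNReal.toReal_mono (by simp) (prob_le_one (μ := μ) (s := s))
  refine int_nonneg_of_tail (μ.restrict A) (hZint.restrict) hZmeas (fun t ht => ?_)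
  rw [Measure.restrict_apply (measurableSet_lt hZmeas measurable_const),
    Measure.restrict_apply (measurableSet_lt measurable_const hZmeas)]
  refine (ENNReal.toReal_le_toReal (measure_ne_top _ _) (measure_ne_top _ _)).mp ?_
  set F := (μ {ω | x < X ω}).toReal with hF
  set Gt := (μ {ω | t < Z ω}).toReal with hGt
  have e1 : (μ ({a | t < Z a} ∩ A)).toReal = Chat F Gt := by
    rw [show {a | t < Z a} ∩ A = {ω | x < X ω ∧ t < Z ω} from by ext ω; simp [hA, and_comm]]
    exact hjoint x t
  have e3 : (μ ({a | -t < Z a} ∩ A)).toReal = Chat F (1 - Gt) := by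
    rw [show {a | -t < Z a} ∩ A = {ω | x < X ω ∧ -t < Z ω} from by ext ω; simp [hA, and_comm]]
    rw [hjoint x (-t), hsymm t]
  have e2 : (μ ({a | Z a < -t} ∩ A)).toReal + (μ ({a | -t < Z a} ∩ A)).toReal ≤ F := by
    have hdisj : Disjoint ({a | Z a < -t} ∩ A) ({a | -t < Z a} ∩ A) := by
      simp only [Set.disjoint_left, mem_inter_iff, mem_setOf_eq]
      intro a ha hb
      linarith [ha.1, hb.1]
    have hsum : μ ({a | Z a < -t} ∩ A) + μ ({a | -t < Z a} ∩ A) ≤ μ A := by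
      rw [← measure_union hdisj ((measurableSet_lt measurable_const hZmeas).inter hAm)]
      exact measure_mono (by intro a ha; rcases ha with h | h <;> exact h.2)
    calc (μ ({a | Z a < -t} ∩ A)).toReal + (μ ({a | -t < Z a} ∩ A)).toReal
        = (μ ({a | Z a < -t} ∩ A) + μ ({a | -t < Z a} ∩ A)).toReal := by
          rw [ENNReal.toReal_add (measure_ne_top _ _) (measure_ne_top _ _)]
      _ ≤ (μ A).toReal := ENNReal.toReal_mono (measure_ne_top _ _) hsum
      _ = F := rfl
  have hIF : F ∈ Icc (0:ℝ) 1 := ⟨ENNReal.toReal_nonneg, hle1 _⟩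
  have hIG : Gt ∈ Icc (0:ℝ) 1 := ⟨ENNReal.toReal_nonneg, hle1 _⟩
  have hw := hwPQD F hIF Gt hIG
  rw [e1]
  linarith [e2, e3]

lemma lemB : ∫ ω, Z ω ∂μ = 0 := by
  rw [tail_repr μ hZint hZmeas]
  rw [sub_eq_zero]
  refine congrArg ENNReal.toReal (lintegral_congr_ae ?_).symm
  have key := meas_le_ae_eq_meas_lt μ (volume.restrict (Ioi (0:ℝ))) (fun a => -Z a)
  filter_upwards [key] with t ht
  have h1 : {a | t < -Z a} = {a | Z a < -t} := by ext a; simp only [mem_setOf_eq]; constructor <;> intro h <;> linarith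
  have h2 : {a | t ≤ -Z a} = {a | -t < Z a}ᶜ := by
    ext a; simp only [mem_setOf_eq, mem_compl_iff, not_lt]; constructor <;> intro h <;> linarith
  rw [h1] at ht
  rw [← ht, h2]
  have hcompl : μ ({a | -t < Z a}ᶜ) = 1 - μ {a | -t < Z a} :=
    prob_compl_eq_one_sub (measurableSet_lt measurable_const hZmeas)
  refine (ENNReal.toReal_eq_toReal_iff' (measure_ne_top _ _) (measure_ne_top _ _)).mp ?_
  rw [hcompl, ENNReal.toReal_sub_of_le (prob_le_one) (by simp), hsymm t]
  simp

lemma lemA' (x : ℝ) : 0 ≤ ∫ ω in {ω | x ≤ X ω}, Z ω ∂μ := by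
  have hmemn : ∀ n : ℕ, MeasurableSet {ω | x - 1/(n+1) < X ω} :=
    fun n => measurableSet_lt measurable_const hX
  have hmem : MeasurableSet {ω | x ≤ X ω} := measurableSet_le measurable_const hX
  have key : Filter.Tendsto (fun n : ℕ => ∫ ω, ({ω | x - 1/(n+1) < X ω}.indicator Z) ω ∂μ)
      Filter.atTop (nhds (∫ ω, ({ω | x ≤ X ω}.indicator Z) ω ∂μ)) := by
    refine tendsto_integral_of_dominated_convergence (fun ω => |Z ω|) ?_ hZint.abs ?_ ?_
    · exact fun n => ((hZmeas.indicator (hmemn n)).aestronglyMeasurable)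
    · intro n
      refine Filter.Eventually.of_forall fun ω => ?_
      rw [Real.norm_eq_abs]
      classical
      by_cases h : ω ∈ {ω | x - 1/(n+1) < X ω}
      · rw [indicator_of_mem h]
      · rw [indicator_of_notMem h]; simp [abs_nonneg]
    · refine Filter.Eventually.of_forall fun ω => ?_
      by_cases h : x ≤ X ω
      · have : ∀ n : ℕ, ({ω | x - 1/(n+1) < X ω}.indicator Z) ω = ({ω | x ≤ X ω}.indicator Z) ω := by
          intro n
          have hn : (0:ℝ) < 1/(n+1) := by positivity
          rw [indicator_of_mem (show ω ∈ {ω | x - 1/(n+1) < X ω} from by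
            simp only [mem_setOf_eq]; linarith),
            indicator_of_mem (show ω ∈ {ω | x ≤ X ω} from h)]
        simp_rw [this]
        exact tendsto_const_nhds
      · push_neg at h
        rw [indicator_of_notMem (by simpa using not_le.mpr h)]
        obtain ⟨N, hN⟩ := exists_nat_gt (1 / (x - X ω))
        refine Filter.Tendsto.congr' ?_ tendsto_const_nhds
        filter_upwards [Filter.eventually_ge_atTop N] with n hn
        rw [eq_comm, indicator_of_notMem]
        simp only [mem_setOf_eq, not_lt]
        have hxX : 0 < x - X ω := by linarith
        have h1 : 1 / (x - X ω) < (n:ℝ) + 1 := by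
          have : (N:ℝ) ≤ n := by exact_mod_cast hn
          linarith
        have h2 : 1 / ((n:ℝ)+1) < x - X ω := by
          have h1' : 1 < ((n:ℝ)+1) * (x - X ω) := (div_lt_iff₀ hxX).mp h1
          rw [div_lt_iff₀ (by positivity)]
          linarith [mul_comm ((n:ℝ)+1) (x - X ω)]
        linarith
  have hev : ∀ n : ℕ, 0 ≤ ∫ ω, ({ω | x - 1/(n+1) < X ω}.indicator Z) ω ∂μ := by
    intro n
    rw [integral_indicator (hmemn n)]
    exact lemA μ X Z hX hZmeas hZint Chat hjoint hsymm hwPQD _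
  have := ge_of_tendsto' key hev
  rwa [integral_indicator hmem] at this

end Main



lemma lemE (μ : Measure Ω) [IsProbabilityMeasure μ] (X Z : Ω → ℝ) (hX : Measurable X)
    (hA : ∀ x : ℝ, 0 ≤ ∫ ω in {ω | x < X ω}, Z ω ∂μ)
    (hA' : ∀ x : ℝ, 0 ≤ ∫ ω in {ω | x ≤ X ω}, Z ω ∂μ)
    (hB : ∫ ω, Z ω ∂μ = 0)
    (g : ℝ → ℝ) (hg : Monotone g) (s : ℝ) :
    0 ≤ ∫ ω, (if s < g (X ω) then (1:ℝ) else 0) * Z ω ∂μ := by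
  set U : Set ℝ := {y | s < g y} with hUdef
  have hupper : ∀ y z : ℝ, y ∈ U → y ≤ z → z ∈ U := fun y z hy hyz =>
    lt_of_lt_of_le hy (hg hyz)
  by_cases hne : U.Nonempty
  · by_cases hbd : BddBelow U
    · set h0 := sInf U with hh0
      by_cases hm : h0 ∈ U
      · have heq : ∀ ω, (if s < g (X ω) then (1:ℝ) else 0) * Z ω
            = {ω | h0 ≤ X ω}.indicator Z ω := by
          intro ω
          by_cases hc : h0 ≤ X ω
          · rw [if_pos (show s < g (X ω) from hupper h0 (X ω) hm hc), one_mul,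
              indicator_of_mem (show ω ∈ {ω | h0 ≤ X ω} from hc)]
          · rw [if_neg (show ¬ s < g (X ω) from fun hcon => hc (csInf_le hbd (show X ω ∈ U from hcon))), zero_mul,
              indicator_of_notMem (show ω ∉ {ω | h0 ≤ X ω} from hc)]
        rw [show (fun ω => (if s < g (X ω) then (1:ℝ) else 0) * Z ω)
            = {ω | h0 ≤ X ω}.indicator Z from funext heq,
          integral_indicator (measurableSet_le measurable_const hX)]
        exact hA' h0
      · have heq : ∀ ω, (if s < g (X ω) then (1:ℝ) else 0) * Z ω
            = {ω | h0 < X ω}.indicator Z ω := by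
          intro ω
          by_cases hc : h0 < X ω
          · obtain ⟨w, hwU, hwy⟩ := exists_lt_of_csInf_lt hne hc
            rw [if_pos (show s < g (X ω) from hupper w (X ω) hwU hwy.le), one_mul,
              indicator_of_mem (show ω ∈ {ω | h0 < X ω} from hc)]
          · have hnot : ¬ s < g (X ω) := by
              intro hcon
              have h1 : h0 ≤ X ω := csInf_le hbd (show X ω ∈ U from hcon)
              rcases eq_or_lt_of_le h1 with h2 | h2
              · exact hm (h2 ▸ (show X ω ∈ U from hcon))
              · exact hc h2
            rw [if_neg hnot, zero_mul,
              indicator_of_notMem (show ω ∉ {ω | h0 < X ω} from hc)]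
        rw [show (fun ω => (if s < g (X ω) then (1:ℝ) else 0) * Z ω)
            = {ω | h0 < X ω}.indicator Z from funext heq,
          integral_indicator (measurableSet_lt measurable_const hX)]
        exact hA h0
    · have hall : ∀ y : ℝ, y ∈ U := by
        intro y
        obtain ⟨w, hwU, hwy⟩ := (not_bddBelow_iff.mp hbd) y
        exact hupper w y hwU hwy.le
      have heq : ∀ ω, (if s < g (X ω) then (1:ℝ) else 0) * Z ω = Z ω := fun ω => by
        rw [if_pos (show s < g (X ω) from hall (X ω)), one_mul]
      rw [show (fun ω => (if s < g (X ω) then (1:ℝ) else 0) * Z ω) = Z from funext heq]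
      exact le_of_eq hB.symm
  · have heq : ∀ ω, (if s < g (X ω) then (1:ℝ) else 0) * Z ω = 0 := fun ω => by
      rw [if_neg (show ¬ s < g (X ω) from fun h => hne ⟨X ω, h⟩), zero_mul]
    rw [show (fun ω => (if s < g (X ω) then (1:ℝ) else 0) * Z ω) = fun _ => (0:ℝ)
      from funext heq, integral_zero]

lemma lemC (μ : Measure Ω) [IsProbabilityMeasure μ] (X Z : Ω → ℝ) (hX : Measurable X)
    (hZmeas : Measurable Z) (hZint : Integrable Z μ)
    (g : ℝ → ℝ) (hg : Monotone g) (a b : ℝ) (hab : ∀ t, g t ∈ Icc a b)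
    (hB : ∫ ω, Z ω ∂μ = 0)
    (hE : ∀ s : ℝ, 0 ≤ ∫ ω, (if s < g (X ω) then (1:ℝ) else 0) * Z ω ∂μ) :
    0 ≤ ∫ ω, g (X ω) * Z ω ∂μ := by
  have hgm : Measurable g := hg.measurable
  have hgbd : ∀ t, |g t| ≤ max |a| |b| := by
    intro t
    rcases hab t with ⟨h1, h2⟩
    rw [abs_le]
    constructor
    · calc -(max |a| |b|) ≤ -|a| := by simp [neg_le_neg_iff]
        _ ≤ a := neg_abs_le a
        _ ≤ g t := h1
    · exact h2.trans ((le_abs_self b).trans (le_max_right _ _))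
  have hgXZ_int : Integrable (fun ω => g (X ω) * Z ω) μ := by
    refine Integrable.mono' (hZint.abs.const_mul (max |a| |b|))
      (((hgm.comp hX).mul hZmeas).aestronglyMeasurable)
      (Filter.Eventually.of_forall fun ω => ?_)
    rw [Real.norm_eq_abs, abs_mul]
    exact mul_le_mul_of_nonneg_right (hgbd (X ω)) (abs_nonneg _)
  -- reduce to (g(X) - a) * Z
  have hsub_int : Integrable (fun ω => (g (X ω) - a) * Z ω) μ := by
    have : (fun ω => (g (X ω) - a) * Z ω) = fun ω => g (X ω) * Z ω - a * Z ω := by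
      funext ω; ring
    rw [this]
    exact hgXZ_int.sub (hZint.const_mul a)
  have hdecomp : ∫ ω, g (X ω) * Z ω ∂μ = ∫ ω, (g (X ω) - a) * Z ω ∂μ := by
    have : (fun ω => g (X ω) * Z ω) = fun ω => (g (X ω) - a) * Z ω + a * Z ω := by
      funext ω; ring
    rw [this, integral_add hsub_int (hZint.const_mul a), integral_const_mul, hB, mul_zero, add_zero]
  rw [hdecomp]
  set ν : Measure ℝ := volume.restrict (Ioc a b) with hν
  have claim1 : ∀ x : ℝ, ∫ s, (if s < g x then (1:ℝ) else 0) ∂ν = g x - a := by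
    intro x
    have h1 : (fun s => if s < g x then (1:ℝ) else 0) = (Iio (g x)).indicator (fun _ => 1) := by
      funext s
      by_cases hc : s < g x
      · rw [if_pos hc, indicator_of_mem (show s ∈ Iio (g x) from hc)]
      · rw [if_neg hc, indicator_of_notMem (show s ∉ Iio (g x) from hc)]
    rw [h1, integral_indicator measurableSet_Iio, setIntegral_const, measureReal_def,
      Measure.restrict_apply measurableSet_Iio]
    have h2 : Iio (g x) ∩ Ioc a b = Ioo a (g x) := by
      ext s
      simp only [mem_inter_iff, mem_Iio, mem_Ioc, mem_Ioo]
      constructor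
      · rintro ⟨h3, h4, h5⟩; exact ⟨h4, h3⟩
      · rintro ⟨h3, h4⟩; exact ⟨h4, h3, h4.le.trans (hab x).2⟩
    rw [h2, Real.volume_Ioo, smul_eq_mul, mul_one,
      ENNReal.toReal_ofReal (sub_nonneg.mpr (hab x).1)]
  haveI : IsFiniteMeasure ν := by
    constructor
    rw [hν, Measure.restrict_apply_univ, Real.volume_Ioc]
    exact ENNReal.ofReal_lt_top
  have hSmeas : MeasurableSet {p : Ω × ℝ | p.2 < g (X p.1)} :=
    measurableSet_lt measurable_snd ((hgm.comp hX).comp measurable_fst)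
  have hFmeas : Measurable (fun p : Ω × ℝ => (if p.2 < g (X p.1) then (1:ℝ) else 0) * Z p.1) :=
    (Measurable.ite hSmeas measurable_const measurable_const).mul (hZmeas.comp measurable_fst)
  have hbound : Integrable (fun p : Ω × ℝ => |Z p.1|) (μ.prod ν) := by
    have := (hZint.abs).mul_prod (integrable_const (1:ℝ)) (ν := ν)
    simpa using this
  have hFint : Integrable
      (Function.uncurry fun (ω : Ω) (s : ℝ) => (if s < g (X ω) then (1:ℝ) else 0) * Z ω)
      (μ.prod ν) := by
    refine Integrable.mono' hbound hFmeas.aestronglyMeasurable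
      (Filter.Eventually.of_forall fun p => ?_)
    rw [Function.uncurry, Real.norm_eq_abs, abs_mul]
    have h1 : |if p.2 < g (X p.1) then (1:ℝ) else 0| ≤ 1 := by
      split_ifs <;> simp
    calc |if p.2 < g (X p.1) then (1:ℝ) else 0| * |Z p.1| ≤ 1 * |Z p.1| :=
          mul_le_mul_of_nonneg_right h1 (abs_nonneg _)
      _ = |Z p.1| := one_mul _
  have hswap := integral_integral_swap hFint
  have hL : ∀ ω, ∫ s, (if s < g (X ω) then (1:ℝ) else 0) * Z ω ∂ν = (g (X ω) - a) * Z ω := by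
    intro ω
    rw [integral_mul_const, claim1 (X ω)]
  calc (0:ℝ) ≤ ∫ s, ∫ ω, (if s < g (X ω) then (1:ℝ) else 0) * Z ω ∂μ ∂ν :=
        integral_nonneg fun s => hE s
    _ = ∫ ω, ∫ s, (if s < g (X ω) then (1:ℝ) else 0) * Z ω ∂ν ∂μ := hswap.symm
    _ = ∫ ω, (g (X ω) - a) * Z ω ∂μ := by simp_rw [hL]



noncomputable def rightD (u : ℝ → ℝ) (t : ℝ) : ℝ :=
  sInf ((fun y => (u y - u t) / (y - t)) '' Ioi t)

section Convex
variable {u : ℝ → ℝ} (hu : ConvexOn ℝ univ u)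
include hu

lemma slope3 {x y z : ℝ} (hxy : x < y) (hyz : y < z) :
    (u y - u x) / (y - x) ≤ (u z - u y) / (z - y) :=
  hu.slope_mono_adjacent (mem_univ x) (mem_univ z) hxy hyz

lemma rightD_bddBelow (t : ℝ) : BddBelow ((fun y => (u y - u t) / (y - t)) '' Ioi t) := by
  refine ⟨(u t - u (t-1)) / (t - (t-1)), ?_⟩
  rintro _ ⟨y, hy, rfl⟩
  exact slope3 hu (by linarith) hy

lemma rightD_nonempty (t : ℝ) : ((fun y => (u y - u t) / (y - t)) '' Ioi t).Nonempty :=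
  ⟨_, mem_image_of_mem _ (show t + 1 ∈ Ioi t from lt_add_one t)⟩

lemma rightD_le_slope {t y : ℝ} (hy : t < y) : rightD u t ≤ (u y - u t) / (y - t) :=
  csInf_le (rightD_bddBelow hu t) (mem_image_of_mem _ hy)

lemma slope_le_rightD {x t : ℝ} (hx : x < t) : (u t - u x) / (t - x) ≤ rightD u t := by
  refine le_csInf (rightD_nonempty hu t) ?_
  rintro _ ⟨y, hy, rfl⟩
  exact slope3 hu hx hy

lemma rightD_mono : Monotone (rightD u) := by
  intro p q hpq
  rcases eq_or_lt_of_le hpq with h | h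
  · rw [h]
  · refine le_csInf (rightD_nonempty hu q) ?_
    rintro _ ⟨y, hy, rfl⟩
    exact (rightD_le_slope hu h).trans (slope3 hu h hy)

lemma rightD_subgrad (p q : ℝ) : u p + rightD u p * (q - p) ≤ u q := by
  rcases lt_trichotomy p q with h | h | h
  · have h1 := rightD_le_slope hu h
    have hd : (0:ℝ) < q - p := by linarith
    rw [le_div_iff₀ hd] at h1
    linarith
  · rw [h]; simp
  · have h1 := slope_le_rightD hu h
    have hd : (0:ℝ) < p - q := by linarith
    rw [div_le_iff₀ hd] at h1
    nlinarith
end Convex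

/-- clamp to [-n, n] -/
noncomputable def clampN (n : ℕ) (x : ℝ) : ℝ := min (n:ℝ) (max (-(n:ℝ)) x)

lemma clampN_monotone (n : ℕ) : Monotone (clampN n) := fun x y h =>
  min_le_min le_rfl (max_le_max le_rfl h)

lemma clampN_mem (n : ℕ) (x : ℝ) : clampN n x ∈ Icc (-(n:ℝ)) (n:ℝ) := by
  constructor
  · exact le_min (neg_nonpos_of_nonneg (Nat.cast_nonneg n) |>.trans (Nat.cast_nonneg n))
      (le_max_left _ _)
  · exact min_le_left _ _

lemma clampN_of_nonneg (n : ℕ) {x : ℝ} (hx : 0 ≤ x) : clampN n x = min (n:ℝ) x := by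
  rw [clampN, max_eq_right (by linarith [neg_nonpos_of_nonneg (Nat.cast_nonneg (α := ℝ) n)])]

lemma clampN_of_nonpos (n : ℕ) {x : ℝ} (hx : x ≤ 0) : clampN n x = max (-(n:ℝ)) x := by
  rw [clampN, min_eq_right]
  exact (max_le (by simp) (hx.trans (Nat.cast_nonneg n)))

lemma clampN_nonneg_bounds (n : ℕ) {x : ℝ} (hx : 0 ≤ x) : 0 ≤ clampN n x ∧ clampN n x ≤ x := by
  rw [clampN_of_nonneg n hx]
  exact ⟨le_min (Nat.cast_nonneg n) hx, min_le_right _ _⟩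

lemma clampN_nonpos_bounds (n : ℕ) {x : ℝ} (hx : x ≤ 0) : x ≤ clampN n x ∧ clampN n x ≤ 0 := by
  rw [clampN_of_nonpos n hx]
  exact ⟨le_max_right _ _, max_le (by simp) hx⟩

lemma clampN_abs_le (n : ℕ) (x : ℝ) : |clampN n x| ≤ |x| := by
  rcases le_total 0 x with hx | hx
  · obtain ⟨h1, h2⟩ := clampN_nonneg_bounds n hx
    rw [abs_of_nonneg h1, abs_of_nonneg hx]; exact h2
  · obtain ⟨h1, h2⟩ := clampN_nonpos_bounds n hx
    rw [abs_of_nonpos h2, abs_of_nonpos hx]; linarith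

lemma clampN_abs_mono {n m : ℕ} (h : n ≤ m) (x : ℝ) : |clampN n x| ≤ |clampN m x| := by
  have hc : ((n:ℝ)) ≤ (m:ℝ) := Nat.cast_le.mpr h
  rcases le_total 0 x with hx | hx
  · obtain ⟨h1, _⟩ := clampN_nonneg_bounds n hx
    obtain ⟨h1', _⟩ := clampN_nonneg_bounds m hx
    rw [abs_of_nonneg h1, abs_of_nonneg h1', clampN_of_nonneg n hx, clampN_of_nonneg m hx]
    exact min_le_min hc le_rfl
  · obtain ⟨_, h2⟩ := clampN_nonpos_bounds n hx
    obtain ⟨_, h2'⟩ := clampN_nonpos_bounds m hx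
    rw [abs_of_nonpos h2, abs_of_nonpos h2', clampN_of_nonpos n hx, clampN_of_nonpos m hx]
    exact neg_le_neg (max_le_max (neg_le_neg hc) le_rfl)

lemma clampN_eventually_eq (x : ℝ) : ∃ N : ℕ, ∀ m : ℕ, N ≤ m → clampN m x = x := by
  obtain ⟨N, hN⟩ := exists_nat_ge |x|
  refine ⟨N, fun m hm => ?_⟩
  have hm' : |x| ≤ (m:ℝ) := hN.trans (Nat.cast_le.mpr hm)
  rw [clampN, max_eq_right (by rw [neg_le]; exact (neg_le_abs x).trans hm' |>.trans le_rfl),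
    min_eq_right ((le_abs_self x).trans hm')]

lemma clampN_mul_le_max (n : ℕ) (y z : ℝ) : clampN n y * z ≤ max (y * z) 0 := by
  rcases le_total 0 y with hy | hy <;> rcases le_total 0 z with hz | hz
  · obtain ⟨h1, h2⟩ := clampN_nonneg_bounds n hy
    exact le_max_of_le_left (by nlinarith)
  · obtain ⟨h1, h2⟩ := clampN_nonneg_bounds n hy
    exact le_max_of_le_right (by nlinarith)
  · obtain ⟨h1, h2⟩ := clampN_nonpos_bounds n hy
    exact le_max_of_le_right (by nlinarith)
  · obtain ⟨h1, h2⟩ := clampN_nonpos_bounds n hy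
    exact le_max_of_le_left (by nlinarith)


lemma lemD (μ : Measure Ω) [IsProbabilityMeasure μ] (X Z : Ω → ℝ) (hX : Measurable X)
    (hZmeas : Measurable Z) (hZint : Integrable Z μ)
    (hC : ∀ g : ℝ → ℝ, Monotone g → ∀ a b : ℝ, (∀ t, g t ∈ Icc a b) →
      0 ≤ ∫ ω, g (X ω) * Z ω ∂μ)
    (u : ℝ → ℝ) (hu : ConvexOn ℝ univ u)
    (hu1 : Integrable (fun ω => u (X ω)) μ) (hu2 : Integrable (fun ω => u (X ω + Z ω)) μ) :
    ∫ ω, u (X ω) ∂μ ≤ ∫ ω, u (X ω + Z ω) ∂μ := by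
  set g : ℝ → ℝ := rightD u with hgdef
  have hg : Monotone g := rightD_mono hu
  have hgm : Measurable g := hg.measurable
  set W : Ω → ℝ := fun ω => u (X ω + Z ω) - u (X ω) with hWdef
  have hWint : Integrable W μ := hu2.sub hu1
  set V : Ω → ℝ := fun ω => g (X ω) * Z ω with hVdef
  have hVmeas : Measurable V := (hgm.comp hX).mul hZmeas
  have hVW : ∀ ω, V ω ≤ W ω := by
    intro ω
    have h := rightD_subgrad hu (X ω) (X ω + Z ω)
    rw [add_sub_cancel_left] at h
    simp only [hVdef, hWdef]
    linarith
  set Vn : ℕ → Ω → ℝ := fun n ω => clampN n (g (X ω)) * Z ω with hVndef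
  have hVnmeas : ∀ n, Measurable (Vn n) := fun n =>
    ((((clampN_monotone n).comp hg).measurable).comp hX).mul hZmeas
  have hVnint : ∀ n, Integrable (Vn n) μ := by
    intro n
    refine Integrable.mono' (hZint.abs.const_mul (n:ℝ)) (hVnmeas n).aestronglyMeasurable
      (Filter.Eventually.of_forall fun ω => ?_)
    rw [Real.norm_eq_abs, abs_mul]
    refine mul_le_mul_of_nonneg_right ?_ (abs_nonneg _)
    have := clampN_mem n (g (X ω))
    rw [abs_le]
    exact ⟨this.1, this.2⟩
  have hVn_nonneg : ∀ n, 0 ≤ ∫ ω, Vn n ω ∂μ := fun n =>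
    hC (fun t => clampN n (g t)) ((clampN_monotone n).comp hg) (-(n:ℝ)) n
      (fun t => clampN_mem n (g t))
  -- positive part comparison
  have hVn_le_maxW : ∀ n ω, Vn n ω ≤ max (W ω) 0 := by
    intro n ω
    calc Vn n ω ≤ max (V ω) 0 := clampN_mul_le_max n (g (X ω)) (Z ω)
      _ ≤ max (W ω) 0 := max_le_max (hVW ω) le_rfl
  have hmaxVn_le : ∀ n ω, max (Vn n ω) 0 ≤ max (W ω) 0 := fun n ω =>
    max_le (hVn_le_maxW n ω) (le_max_right _ _)
  set M : ℝ := ∫ ω, max (W ω) 0 ∂μ with hMdef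
  have hM : ∀ n, ∫ ω, |Vn n ω| ∂μ ≤ 2 * M := by
    intro n
    have habs : ∀ ω, |Vn n ω| = 2 * max (Vn n ω) 0 - Vn n ω := by
      intro ω
      rcases le_total 0 (Vn n ω) with h | h
      · rw [abs_of_nonneg h, max_eq_left h]; ring
      · rw [abs_of_nonpos h, max_eq_right h]; ring
    calc ∫ ω, |Vn n ω| ∂μ = ∫ ω, (2 * max (Vn n ω) 0 - Vn n ω) ∂μ := by
          exact integral_congr_ae (Filter.Eventually.of_forall habs)
      _ = 2 * ∫ ω, max (Vn n ω) 0 ∂μ - ∫ ω, Vn n ω ∂μ := by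
          rw [integral_sub ((hVnint n).pos_part.const_mul 2) (hVnint n), integral_const_mul]
      _ ≤ 2 * ∫ ω, max (W ω) 0 ∂μ - 0 := by
          have h1 : ∫ ω, max (Vn n ω) 0 ∂μ ≤ ∫ ω, max (W ω) 0 ∂μ :=
            integral_mono (hVnint n).pos_part hWint.pos_part (fun ω => hmaxVn_le n ω)
          linarith [hVn_nonneg n]
      _ = 2 * M := by rw [hMdef]; ring
  -- integrability of V
  have hMnonneg : 0 ≤ M := integral_nonneg fun ω => le_max_right _ _
  have hVint : Integrable V μ := by
    refine ⟨hVmeas.aestronglyMeasurable, ?_⟩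
    rw [hasFiniteIntegral_def]
    have hkey : ∀ ω, (‖V ω‖₊ : ENNReal) = ⨆ n, ENNReal.ofReal |Vn n ω| := by
      intro ω
      refine le_antisymm ?_ (iSup_le fun n => ?_)
      · obtain ⟨N, hN⟩ := clampN_eventually_eq (g (X ω))
        refine le_iSup_of_le N ?_
        rw [← enorm_eq_nnnorm, ← ofReal_norm, Real.norm_eq_abs]
        refine ENNReal.ofReal_le_ofReal (le_of_eq ?_)
        simp only [hVndef, hVdef]
        rw [hN N le_rfl]
      · rw [← enorm_eq_nnnorm, ← ofReal_norm, Real.norm_eq_abs]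
        refine ENNReal.ofReal_le_ofReal ?_
        simp only [hVndef, hVdef, abs_mul]
        exact mul_le_mul_of_nonneg_right (clampN_abs_le n _) (abs_nonneg _)
    calc ∫⁻ ω, (‖V ω‖₊ : ENNReal) ∂μ = ∫⁻ ω, ⨆ n, ENNReal.ofReal |Vn n ω| ∂μ := by
          exact lintegral_congr fun ω => hkey ω
      _ = ⨆ n, ∫⁻ ω, ENNReal.ofReal |Vn n ω| ∂μ := by
          refine lintegral_iSup (fun n => ?_) (fun n m hnm ω => ?_)
          · exact ENNReal.measurable_ofReal.comp (hVnmeas n).abs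
          · refine ENNReal.ofReal_le_ofReal ?_
            simp only [hVndef, abs_mul]
            exact mul_le_mul_of_nonneg_right (clampN_abs_mono hnm _) (abs_nonneg _)
      _ ≤ ENNReal.ofReal (2 * M) := by
          refine iSup_le fun n => ?_
          rw [← ofReal_integral_eq_lintegral_ofReal (hVnint n).abs
            (Filter.Eventually.of_forall fun ω => abs_nonneg _)]
          exact ENNReal.ofReal_le_ofReal (hM n)
      _ < ⊤ := ENNReal.ofReal_lt_top
  -- dominated convergence
  have htend : Filter.Tendsto (fun n => ∫ ω, Vn n ω ∂μ) Filter.atTop (nhds (∫ ω, V ω ∂μ)) := by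
    refine tendsto_integral_of_dominated_convergence (fun ω => |V ω|)
      (fun n => (hVnmeas n).aestronglyMeasurable) hVint.abs ?_ ?_
    · intro n
      refine Filter.Eventually.of_forall fun ω => ?_
      rw [Real.norm_eq_abs]
      simp only [hVndef, hVdef, abs_mul]
      exact mul_le_mul_of_nonneg_right (clampN_abs_le n _) (abs_nonneg _)
    · refine Filter.Eventually.of_forall fun ω => ?_
      obtain ⟨N, hN⟩ := clampN_eventually_eq (g (X ω))
      refine Filter.Tendsto.congr' ?_ tendsto_const_nhds
      filter_upwards [Filter.eventually_ge_atTop N] with n hn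
      simp only [hVndef, hVdef]
      rw [hN n hn]
  have hV_nonneg : 0 ≤ ∫ ω, V ω ∂μ := ge_of_tendsto' htend hVn_nonneg
  have hVleW : ∫ ω, V ω ∂μ ≤ ∫ ω, W ω ∂μ :=
    integral_mono hVint hWint hVW
  have hWsplit : ∫ ω, W ω ∂μ = ∫ ω, u (X ω + Z ω) ∂μ - ∫ ω, u (X ω) ∂μ :=
    integral_sub hu2 hu1
  linarith


end Aux

/-- If `(X,Z)` has survival copula `Ĉ`, `Z` is integrable and symmetric around zero,
and `Ĉ(u,v) + Ĉ(u,1-v) ≥ u`, then `E(Z | X > x) ≥ 0` whenever `P(X > x) > 0`;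
consequently `X ≤_CX X + Z`. -/
theorem stmt14 {Ω : Type*} [MeasurableSpace Ω] (μ : Measure Ω) [IsProbabilityMeasure μ]
    (X Z : Ω → ℝ) (hX : Measurable X) (hZmeas : Measurable Z)
    (hXint : Integrable X μ) (hZint : Integrable Z μ)
    (Chat : ℝ → ℝ → ℝ) (hChat : IsCopula Chat)
    (hjoint : ∀ x z : ℝ, (μ {ω | x < X ω ∧ z < Z ω}).toReal =
      Chat (μ {ω | x < X ω}).toReal (μ {ω | z < Z ω}).toReal)
    (hsymm : ∀ z : ℝ, (μ {ω | -z < Z ω}).toReal = 1 - (μ {ω | z < Z ω}).toReal)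
    (hwPQD : ∀ u ∈ Icc (0:ℝ) 1, ∀ v ∈ Icc (0:ℝ) 1, u ≤ Chat u v + Chat u (1 - v)) :
    (∀ x : ℝ, 0 < μ {ω | x < X ω} → 0 ≤ condExpEvent μ Z {ω | x < X ω}) ∧
    (∀ u : ℝ → ℝ, ConvexOn ℝ univ u →
      Integrable (fun ω => u (X ω)) μ → Integrable (fun ω => u (X ω + Z ω)) μ →
      ∫ ω, u (X ω) ∂μ ≤ ∫ ω, u (X ω + Z ω) ∂μ) := by
  have hA : ∀ x : ℝ, 0 ≤ ∫ ω in {ω | x < X ω}, Z ω ∂μ :=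
    fun x => lemA μ X Z hX hZmeas hZint Chat hjoint hsymm hwPQD x
  have hB : ∫ ω, Z ω ∂μ = 0 := lemB μ X Z hX hZmeas hZint Chat hjoint hsymm hwPQD
  have hA' : ∀ x : ℝ, 0 ≤ ∫ ω in {ω | x ≤ X ω}, Z ω ∂μ :=
    fun x => lemA' μ X Z hX hZmeas hZint Chat hjoint hsymm hwPQD x
  have hC : ∀ g : ℝ → ℝ, Monotone g → ∀ a b : ℝ, (∀ t, g t ∈ Icc a b) →
      0 ≤ ∫ ω, g (X ω) * Z ω ∂μ := fun g hg a b hab =>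
    lemC μ X Z hX hZmeas hZint g hg a b hab hB (fun s => lemE μ X Z hX hA hA' hB g hg s)
  constructor
  · intro x _
    exact div_nonneg (hA x) ENNReal.toReal_nonneg
  · intro u hu hu1 hu2
    exact lemD μ X Z hX hZmeas hZint hC u hu hu1 hu2
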